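/- Assume M^u(ω) is a Lipschitz unstable manifold of the random delayed partial differential equation dv/dt = Av − μv + Lv_t + Lz(θ_{t+·}ω) + f(v_t + z(θ_{t+·}ω)) + Az(θ_tω) on 𝓛. Then M̃^u(ω) := {ψ + z(θ_·ω) : ψ ∈ M^u(ω)} is a Lipschitz unstable manifold of the stochastic retarded partial differential equation du/dt = Au − μu + Lu_t + f(u_t) + Σ_{j=1}^m g_j dw_j/dt on 𝓛. Moreover, if M^u(ω) is C^k and ω ↦ z(θ_·ω) is C^k on 𝓛, then M̃^u(ω) is a C^k unstable manifold of the stochastic retarded partial differential equation on 𝓛. -/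

import Mathlib

open MeasureTheory Set Filter
open scoped Topology NNReal

noncomputable section

/-- A strongly continuous semigroup of bounded linear operators. -/
def IsC0Semigroup {E : Type*} [NormedAddCommGroup E] [NormedSpace ℝ E]
    (T : ℝ → E →L[ℝ] E) : Prop :=
  T 0 = ContinuousLinearMap.id ℝ E ∧
    (∀ s t : ℝ, 0 ≤ s → 0 ≤ t → T (s + t) = (T s).comp (T t)) ∧
    ∀ x : E, ContinuousOn (fun t => T t x) (Ici (0 : ℝ))

/-- if `M^u(ω) = {ζ + h^u(ζ,ω) : ζ ∈ P₁P^uN^u(ω)}` is a Lipschitz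
unstable manifold of the random delayed PDE, then `M̃^u(ω) = {ψ + z(θ_·ω) : ψ ∈ M^u(ω)}`
is a Lipschitz unstable manifold of the stochastic retarded PDE
`du/dt = Au - μu + Lu_t + f(u_t) + Σ g_j dw_j/dt`; moreover, if `M^u(ω)` is `C^k` and
`ω ↦ z(θ_·ω)` is `C^k` on `𝓛`, then `M̃^u(ω)` is a `C^k` unstable manifold of the
stochastic retarded PDE. -/
theorem stmt10
    {𝕏 : Type*} [NormedAddCommGroup 𝕏] [InnerProductSpace ℝ 𝕏] [CompleteSpace 𝕏]
    [SecondCountableTopology 𝕏]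
    (τ μ : ℝ) (hτ : 0 < τ) (hμ : 0 < μ)
    (ν : Measure ℝ) (hν : ν = volume.restrict (Icc (-τ) 0))
    (L : Lp 𝕏 2 ν →L[ℝ] 𝕏)
    (St : ℝ → (Lp 𝕏 2 ν × 𝕏) →L[ℝ] (Lp 𝕏 2 ν × 𝕏)) (hSt : IsC0Semigroup St)
    -- dichotomy projections (Hypotheses A1–A3)
    (Pu Ps : (Lp 𝕏 2 ν × 𝕏) →L[ℝ] (Lp 𝕏 2 ν × 𝕏))
    (hPs : Ps = ContinuousLinearMap.id ℝ _ - Pu) (hPproj : Pu.comp Pu = Pu)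
    (hPcomm : ∀ t ≥ (0:ℝ), (St t).comp Pu = Pu.comp (St t))
    -- the metric dynamical system and the Ornstein–Uhlenbeck process z
    {Ω : Type*} [MeasurableSpace Ω] (P : Measure Ω) [IsProbabilityMeasure P]
    (m : ℕ) (θ : ℝ → Ω → Ω)
    (hθ0 : θ 0 = id) (hθadd : ∀ s t : ℝ, θ (s + t) = θ s ∘ θ t)
    (hθmp : ∀ t, MeasurePreserving (θ t) P P)
    (W : Ω → ℝ → Fin m → ℝ)
    (hW0 : ∀ ω, W ω 0 = 0) (hWcont : ∀ ω, Continuous (W ω))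
    (hWshift : ∀ t ω s, W (θ t ω) s = W ω (s + t) - W ω t)
    (g : Fin m → 𝕏) (zX : Ω → 𝕏)
    (hzX : ∀ ω, zX ω =
      ∑ j : Fin m, (-μ * ∫ s in Iic (0:ℝ), Real.exp (μ * s) * W ω s j) • g j)
    (zSeg : ℝ → Ω → Lp 𝕏 2 ν)
    (hzSeg : ∀ t ω, ⇑(zSeg t ω) =ᵐ[ν] fun ξ => zX (θ (t + ξ) ω))
    (Az : ℝ → Ω → 𝕏)
    -- Hypothesis A4 and the nonlinearity F
    (f : Lp 𝕏 2 ν → 𝕏) (Lf : ℝ≥0) (hf : LipschitzWith Lf f) (hf0 : f 0 = 0)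
    (F : ℝ → Ω → (Lp 𝕏 2 ν × 𝕏) → (Lp 𝕏 2 ν × 𝕏))
    (hF : ∀ t ω V, F t ω V = (0, L (zSeg t ω) + f (V.1 + zSeg t ω) + Az t ω))
    -- the forward mild-solution cocycle V of the auxiliary equation
    (V : Ω → (Lp 𝕏 2 ν × 𝕏) → ℝ → (Lp 𝕏 2 ν × 𝕏))
    (hV : ∀ ω ψ, ContinuousOn (V ω ψ) (Ici 0) ∧ V ω ψ 0 = ψ ∧
      ∀ t ≥ (0:ℝ), V ω ψ t = St t ψ + ∫ s in (0:ℝ)..t, St (t - s) (F s ω (V ω ψ s)))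
    (hVcoc : ∀ ω ψ s t, 0 ≤ s → 0 ≤ t → V ω ψ (t + s) = V (θ s ω) (V ω ψ s) t)
    -- N^u(ω) and the Lipschitz unstable manifold M^u(ω) = P₁N^u(ω) of the random PDE
    (η : ℝ) (Nu : Ω → Set (Lp 𝕏 2 ν × 𝕏))
    (hNu : ∀ ω, Nu ω = {ψ | ∃ Vb : ℝ → Lp 𝕏 2 ν × 𝕏,
      ContinuousOn Vb (Iic 0) ∧ Vb 0 = ψ ∧
      (∀ s t : ℝ, s ≤ t → t ≤ 0 →
        Vb t = St (t - s) (Vb s) + ∫ r in s..t, St (t - r) (F r ω (Vb r))) ∧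
      ∃ C : ℝ, ∀ t ≤ (0:ℝ), ‖Vb t‖ ≤ C * Real.exp (η * t)})
    (hu : Ω → Lp 𝕏 2 ν → Lp 𝕏 2 ν) (Chu : ℝ≥0)
    (hhu0 : ∀ ω, hu ω 0 = 0)
    (hhuLip : ∀ ω, LipschitzOnWith Chu (hu ω) (Prod.fst '' (⇑Pu '' Nu ω)))
    (hgraph : ∀ ω, Prod.fst '' Nu ω =
      {x : Lp 𝕏 2 ν | ∃ ζ ∈ Prod.fst '' (⇑Pu '' Nu ω), x = ζ + hu ω ζ})
    (hinv : ∀ ω, ∀ ψ ∈ Nu ω, ∀ t ≥ (0:ℝ), (V ω ψ t).1 ∈ Prod.fst '' Nu (θ t ω))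
    -- the splitting z(θ_·ω) = z₁ + z₂ along 𝓛 ∩ P^uH and 𝓛 ∩ P^sH
    (z₁ z₂ : Ω → Lp 𝕏 2 ν)
    (hsplit : ∀ ω, zSeg 0 ω = z₁ ω + z₂ ω ∧
      z₁ ω ∈ Prod.fst '' (range ⇑Pu) ∧ z₂ ω ∈ Prod.fst '' (range ⇑Ps)) :
    -- M̃^u(ω) = (· + z(θ_·ω)) '' M^u(ω) is invariant under the stochastic solution map
    (∀ ω, ∀ ψ ∈ Nu ω, ∀ t ≥ (0:ℝ),
      (V ω ψ t).1 + zSeg t ω ∈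
        (fun x => x + zSeg 0 (θ t ω)) '' (Prod.fst '' Nu (θ t ω))) ∧
    -- it is the graph of a Lipschitz function over the translated base
    (∃ C' : ℝ≥0, ∀ ω,
      ((fun x => x + zSeg 0 ω) '' (Prod.fst '' Nu ω) =
        {x : Lp 𝕏 2 ν | ∃ ζb ∈ (fun ζ => ζ + z₁ ω) '' (Prod.fst '' (⇑Pu '' Nu ω)),
          x = ζb + (hu ω (ζb - z₁ ω) + z₂ ω)}) ∧
      LipschitzOnWith C' (fun ζb => hu ω (ζb - z₁ ω) + z₂ ω)
        ((fun ζ => ζ + z₁ ω) '' (Prod.fst '' (⇑Pu '' Nu ω)))) ∧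
    -- and if h^u(·,ω) is C^k then the translated graph map is C^k as well
    (∀ k : ℕ, 1 ≤ k →
      (∀ ω, ContDiffOn ℝ k (hu ω) (Prod.fst '' (⇑Pu '' Nu ω))) →
      ∀ ω, ContDiffOn ℝ k (fun ζb => hu ω (ζb - z₁ ω) + z₂ ω)
        ((fun ζ => ζ + z₁ ω) '' (Prod.fst '' (⇑Pu '' Nu ω)))) := by

  -- z-segment cocycle identity
  have hz : ∀ t ω, zSeg t ω = zSeg 0 (θ t ω) := by
    intro t ω
    refine MeasureTheory.Lp.ext ?_
    have h1 := hzSeg t ω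
    have h2 := hzSeg 0 (θ t ω)
    refine h1.trans (EventuallyEq.trans ?_ h2.symm)
    refine Eventually.of_forall fun ξ => ?_
    have key : θ (0 + ξ) (θ t ω) = θ (t + ξ) ω := by
      rw [zero_add, ← Function.comp_apply (f := θ ξ) (g := θ t), ← hθadd, add_comm]
    show zX (θ (t + ξ) ω) = zX (θ (0 + ξ) (θ t ω))
    rw [key]
  refine ⟨?_, ?_, ?_⟩
  · intro ω ψ hψ t ht
    have hmem := hinv ω ψ hψ t ht
    exact ⟨(V ω ψ t).1, hmem, by rw [← hz t ω]⟩
  · refine ⟨Chu, fun ω => ⟨?_, ?_⟩⟩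
    · ext x
      constructor
      · rintro ⟨y, hy, rfl⟩
        rw [hgraph ω] at hy
        obtain ⟨ζ, hζ, rfl⟩ := hy
        refine ⟨ζ + z₁ ω, ⟨ζ, hζ, rfl⟩, ?_⟩
        rw [(hsplit ω).1, add_sub_cancel_right]
        abel
      · rintro ⟨ζb, ⟨ζ, hζ, rfl⟩, rfl⟩
        rw [add_sub_cancel_right]
        refine ⟨ζ + hu ω ζ, ?_, ?_⟩
        · rw [hgraph ω]; exact ⟨ζ, hζ, rfl⟩
        · rw [(hsplit ω).1]; dsimp only; abel
    · intro a ha b hb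
      have ha' : a - z₁ ω ∈ Prod.fst '' (⇑Pu '' Nu ω) := by
        obtain ⟨ζ, hζ, rfl⟩ := ha; rwa [add_sub_cancel_right]
      have hb' : b - z₁ ω ∈ Prod.fst '' (⇑Pu '' Nu ω) := by
        obtain ⟨ζ, hζ, rfl⟩ := hb; rwa [add_sub_cancel_right]
      have := hhuLip ω ha' hb'
      calc edist (hu ω (a - z₁ ω) + z₂ ω) (hu ω (b - z₁ ω) + z₂ ω)
          = edist (hu ω (a - z₁ ω)) (hu ω (b - z₁ ω)) := by
            simp [edist_add_right]
        _ ≤ Chu * edist (a - z₁ ω) (b - z₁ ω) := this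
        _ = Chu * edist a b := by rw [edist_sub_right]
  · intro k hk hCk ω
    have hmaps : MapsTo (fun ζb => ζb - z₁ ω)
        ((fun ζ => ζ + z₁ ω) '' (Prod.fst '' (⇑Pu '' Nu ω)))
        (Prod.fst '' (⇑Pu '' Nu ω)) := by
      rintro x ⟨ζ, hζ, rfl⟩
      show ζ + z₁ ω - z₁ ω ∈ _
      rwa [add_sub_cancel_right]
    have hsub : ContDiffOn ℝ k (fun ζb => ζb - z₁ ω)
        ((fun ζ => ζ + z₁ ω) '' (Prod.fst '' (⇑Pu '' Nu ω))) :=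
      (contDiff_id.sub contDiff_const).contDiffOn
    exact ((hCk ω).comp hsub hmaps).add contDiffOn_const
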